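/- Suppose λ = N(ℓ+1) for positive integers N and ℓ ≥ 2, and suppose 0 = x₀ < x₁ < ⋯ < x_p = λℓ is a sequence of integers with x_{i+1} − x_i < ℓ for all i (consecutive gaps less than ℓ). Then there exist at least N disjoint index intervals [i,j] with x_j − x_i ≡ 0 (mod ℓ) and x_j − x_i > 0. -/
import Mathlib
set_option maxHeartbeats 1000000


/-- If `λ = N(ℓ+1)` and `0 = x₀ < x₁ < ⋯ < x_p = λℓ` is a
sequence of integers with consecutive gaps less than `ℓ`, then there exist at
least `N` disjoint index intervals `[aₜ, bₜ]` with
`x_{bₜ} - x_{aₜ} ≡ 0 (mod ℓ)` and `x_{bₜ} - x_{aₜ} > 0`. -/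
theorem stmt18 (N ℓ p : ℕ) (hN : 0 < N) (hℓ : 2 ≤ ℓ) (x : ℕ → ℤ)
    (h0 : x 0 = 0) (hp : x p = (N * (ℓ + 1) * ℓ : ℕ))
    (hmono : ∀ i, i < p → x i < x (i + 1))
    (hgap : ∀ i, i < p → x (i + 1) - x i < ℓ) :
    ∃ a b : ℕ → ℕ,
      (∀ t, t < N → a t < b t ∧ b t ≤ p ∧
        (ℓ : ℤ) ∣ (x (b t) - x (a t)) ∧ 0 < x (b t) - x (a t)) ∧
      (∀ t, t + 1 < N → b t ≤ a (t + 1)) := by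
  classical
  set B : ℤ := (((ℓ + 1) * ℓ : ℕ) : ℤ) with hBdef
  have hB : B = (ℓ : ℤ) * ℓ + ℓ := by simp [hBdef]; push_cast; ring
  have hBnn : (0 : ℤ) ≤ B := by positivity
  have hpB : x p = (N : ℤ) * B := by rw [hp, hBdef]; push_cast; ring
  -- monotonicity on [0,p]
  have hle : ∀ i j, i ≤ j → j ≤ p → x i ≤ x j := by
    intro i j hij hjp
    induction j with
    | zero => have : i = 0 := by omega
              rw [this]
    | succ j ih =>
      rcases Nat.le_succ_iff.mp hij with h | h
      · exact (ih h (by omega)).trans (le_of_lt (hmono j (by omega)))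
      · exact le_of_eq (congrArg x h)
  have hlt : ∀ i j, i < j → j ≤ p → x i < x j := by
    intro i j hij hjp
    calc x i < x (i + 1) := hmono i (by omega)
    _ ≤ x j := hle _ _ (by omega) hjp
  -- least index reaching t*B
  have hex : ∀ t : ℕ, ∃ i, (t : ℤ) * B ≤ x i ∨ i = p := fun t => ⟨p, Or.inr rfl⟩
  set A : ℕ → ℕ := fun t => Nat.find (hex t) with hAdef
  have hAp : ∀ t, A t ≤ p := fun t => Nat.find_le (Or.inr rfl)
  have hAge : ∀ t, t ≤ N → (t : ℤ) * B ≤ x (A t) := by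
    intro t ht
    rcases Nat.find_spec (hex t) with h | h
    · exact h
    · rw [show A t = p from h, hpB]
      have : (t : ℤ) ≤ N := by exact_mod_cast ht
      nlinarith
  have hAmin : ∀ t i, i < A t → x i < (t : ℤ) * B ∧ i < p := by
    intro t i hi
    have := Nat.find_min (hex t) hi
    push_neg at this
    exact ⟨this.1, lt_of_le_of_ne (le_of_lt (lt_of_lt_of_le hi (hAp t))) this.2⟩
  -- x (A t) < t*B + ℓ
  have hAub : ∀ t, x (A t) < (t : ℤ) * B + ℓ := by
    intro t
    rcases Nat.eq_zero_or_pos (A t) with h | h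
    · rw [h, h0]
      have : (0:ℤ) ≤ (t:ℤ) * B := by positivity
      omega
    · obtain ⟨m, hm⟩ := Nat.exists_eq_add_of_lt h
      simp only [Nat.zero_add] at hm
      have hmA : m < A t := by omega
      obtain ⟨h1, h2⟩ := hAmin t m hmA
      have := hgap m h2
      rw [hm]
      simp only [Nat.add_comm m 1] at *
      omega
  -- key growth bound
  have hkey : ∀ t, t < N → ∀ k, k ≤ ℓ →
      A t + k ≤ p ∧ x (A t + k) < (t : ℤ) * B + ℓ + k * (ℓ - 1) := by
    intro t ht k
    induction k with
    | zero => intro _; simpa using ⟨hAp t, by have := hAub t; push_cast; omega⟩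
    | succ k ih =>
      intro hk
      obtain ⟨h1, h2⟩ := ih (by omega)
      have hbnd : x (A t + k) < ((t : ℤ) + 1) * B := by
        have hk' : (k : ℤ) ≤ ℓ := by exact_mod_cast (by omega : k ≤ ℓ)
        have hℓ' : (2:ℤ) ≤ ℓ := by exact_mod_cast hℓ
        nlinarith [hB]
      have hne : A t + k ≠ p := by
        intro h
        rw [h, hpB] at hbnd
        have : ((t:ℤ) + 1) ≤ N := by exact_mod_cast (by omega : t + 1 ≤ N)
        nlinarith
      have hlt' : A t + k < p := lt_of_le_of_ne h1 hne
      have := hgap (A t + k) hlt'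
      refine ⟨by omega, ?_⟩
      have : x (A t + (k + 1)) < x (A t + k) + ℓ := by
        have h' := hgap (A t + k) hlt'
        have : A t + (k + 1) = (A t + k) + 1 := by omega
        rw [this]; omega
      push_cast
      nlinarith [hmono (A t + k) hlt', hgap (A t + k) hlt']
  -- pigeonhole in each block
  haveI : NeZero ℓ := ⟨by omega⟩
  have claim : ∀ t, ∃ q : ℕ × ℕ, t < N →
      A t ≤ q.1 ∧ q.1 < q.2 ∧ q.2 ≤ A t + ℓ ∧
      (ℓ : ℤ) ∣ (x q.2 - x q.1) ∧ 0 < x q.2 - x q.1 := by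
    intro t
    by_cases ht : t < N
    · have hcard : Fintype.card (ZMod ℓ) < Fintype.card (Fin (ℓ + 1)) := by
        simp [ZMod.card]
      obtain ⟨k₁, k₂, hne, heq⟩ :=
        Fintype.exists_ne_map_eq_of_card_lt
          (fun k : Fin (ℓ + 1) => ((x (A t + (k : ℕ)) : ℤ) : ZMod ℓ)) hcard
      -- wlog k₁ < k₂
      obtain ⟨u, v, huv, hequv⟩ : ∃ u v : Fin (ℓ + 1), (u : ℕ) < v ∧
          ((x (A t + (u : ℕ)) : ℤ) : ZMod ℓ) = ((x (A t + (v : ℕ)) : ℤ) : ZMod ℓ) := by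
        rcases lt_or_gt_of_ne (fun h => hne (by exact Fin.ext h) :
            (k₁ : ℕ) ≠ (k₂ : ℕ)) with h | h
        · exact ⟨k₁, k₂, h, heq⟩
        · exact ⟨k₂, k₁, h, heq.symm⟩
      refine ⟨(A t + u, A t + v), fun _ => ?_⟩
      have hv : (v : ℕ) ≤ ℓ := by omega
      have hvp : A t + (v : ℕ) ≤ p := (hkey t ht (v : ℕ) hv).1
      have hpos : 0 < x (A t + (v : ℕ)) - x (A t + (u : ℕ)) := by
        have := hlt (A t + u) (A t + v) (by omega) hvp
        omega
      refine ⟨by omega, by omega, by omega, ?_, hpos⟩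
      have : ((x (A t + (v : ℕ)) - x (A t + (u : ℕ)) : ℤ) : ZMod ℓ) = 0 := by
        push_cast
        rw [← hequv]
        ring
      exact (ZMod.intCast_zmod_eq_zero_iff_dvd _ ℓ).mp this
    · exact ⟨(0, 0), fun h => absurd h ht⟩
  choose f hf using claim
  refine ⟨fun t => (f t).1, fun t => (f t).2, ?_, ?_⟩
  · intro t ht
    dsimp only
    obtain ⟨h1, h2, h3, h4, h5⟩ := hf t ht
    have : A t + ℓ ≤ p := (hkey t ht ℓ le_rfl).1
    exact ⟨h2, by omega, h4, h5⟩
  · intro t ht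
    dsimp only
    obtain ⟨h1, h2, h3, _, _⟩ := hf t (by omega)
    obtain ⟨h1', _, _, _, _⟩ := hf (t + 1) ht
    -- A t + ℓ < A (t+1)
    have hxb : x (A t + ℓ) < ((t : ℤ) + 1) * B := by
      have := (hkey t (by omega) ℓ le_rfl).2
      have hℓ' : (2:ℤ) ≤ ℓ := by exact_mod_cast hℓ
      nlinarith [hB]
    have hge : ((t : ℤ) + 1) * B ≤ x (A (t + 1)) := by
      have := hAge (t + 1) (by omega)
      push_cast at this ⊢
      linarith
    have : A t + ℓ < A (t + 1) := by
      by_contra h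
      push_neg at h
      have := hle (A (t + 1)) (A t + ℓ) h (hkey t (by omega) ℓ le_rfl).1
      omega
    omega
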